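/- Let G be a group, 𝔤 a finite string of elements of G and ℰ a finite partition of G. If the graph Γ(G,𝔤,ℰ) contains vertices A = (a_C) and B = (b_C) with a directed edge from A to B such that a_C ∈ {0,1} and b_C − a_C > 0 for every C ∈ Con(𝔤,ℰ), then G admits a paradoxical decomposition. -/
import Mathlib


open Pointwise

namespace PaperStmt

/-- A group admits a paradoxical decomposition: there are pairwise disjoint subsets
`A 1, …, A p, B 1, …, B q` and group elements `s i`, `t j` such that the translates
`s i • A i` partition `G` and the translates `t j • B j` partition `G`. -/
def IsParadoxical (G : Type*) [Group G] : Prop :=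
  ∃ (p q : ℕ), 0 < p ∧ 0 < q ∧
    ∃ (A : Fin p → Set G) (B : Fin q → Set G) (s : Fin p → G) (t : Fin q → G),
      (∀ i i', i ≠ i' → Disjoint (A i) (A i')) ∧
      (∀ j j', j ≠ j' → Disjoint (B j) (B j')) ∧
      (∀ i j, Disjoint (A i) (B j)) ∧
      (⋃ i, s i • A i) = Set.univ ∧
      (∀ i i', i ≠ i' → Disjoint (s i • A i) (s i' • A i')) ∧
      (⋃ j, t j • B j) = Set.univ ∧
      (∀ j j', j ≠ j' → Disjoint (t j • B j) (t j' • B j'))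

/-- A finitely additive, left-invariant probability measure defined on all subsets of `G`
(the defining property of amenability for a discrete group). -/
def HasLeftInvariantMean (G : Type*) [Group G] : Prop :=
  ∃ μ : Set G → ℝ,
    (∀ A : Set G, 0 ≤ μ A ∧ μ A ≤ 1) ∧
    μ Set.univ = 1 ∧
    (∀ A B : Set G, Disjoint A B → μ (A ∪ B) = μ A + μ B) ∧
    (∀ (g : G) (A : Set G), μ (g • A) = μ A)

/-- A *complete* paradoxical decomposition with `p + q` pieces: the pieces
`A 1, …, A p, B 1, …, B q` form a partition of `G`, and the translates
`s i • A i` and `t j • B j` each form a partition of `G`. -/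
def IsCompleteParadox (G : Type*) [Group G] (p q : ℕ) : Prop :=
  ∃ (A : Fin p → Set G) (B : Fin q → Set G) (s : Fin p → G) (t : Fin q → G),
    (∀ i i', i ≠ i' → Disjoint (A i) (A i')) ∧
    (∀ j j', j ≠ j' → Disjoint (B j) (B j')) ∧
    (∀ i j, Disjoint (A i) (B j)) ∧
    ((⋃ i, A i) ∪ (⋃ j, B j)) = Set.univ ∧
    (⋃ i, s i • A i) = Set.univ ∧
    (∀ i i', i ≠ i' → Disjoint (s i • A i) (s i' • A i')) ∧
    (⋃ j, t j • B j) = Set.univ ∧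
    (∀ j j', j ≠ j' → Disjoint (t j • B j) (t j' • B j'))

/-- The Tarski number of a group: the least total number of pieces `p + q` over all
complete paradoxical decompositions of `G`, and `∞` if there is none. -/
noncomputable def tarskiNumber (G : Type*) [Group G] : ℕ∞ :=
  sInf {N : ℕ∞ | ∃ p q : ℕ, N = ((p + q : ℕ) : ℕ∞) ∧ IsCompleteParadox G p q}

end PaperStmt

open Pointwise

namespace PaperStmt

/-- `E : Fin m → Set G` is a partition of `G`: pairwise disjoint with union all of `G`. -/
def IsPartition {G : Type*} {m : ℕ} (E : Fin m → Set G) : Prop :=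
  (∀ i j, i ≠ j → Disjoint (E i) (E j)) ∧ (⋃ i, E i) = Set.univ

/-- `C = (c_0, …, c_n)` is a configuration for the pair `(g, E)`: there is `x ∈ E (c 0)`
with `g i * x ∈ E (c i)` for `1 ≤ i ≤ n`. -/
def IsConfig {G : Type*} [Group G] {n m : ℕ} (g : Fin n → G) (E : Fin m → Set G)
    (C : Fin (n + 1) → Fin m) : Prop :=
  ∃ x : G, x ∈ E (C 0) ∧ ∀ i : Fin n, g i * x ∈ E (C i.succ)

/-- `x_0(C) = E_{c_0} ∩ ⋂_{j=1}^n g_j⁻¹ E_{c_j}`. -/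
def xzero {G : Type*} [Group G] {n m : ℕ} (g : Fin n → G) (E : Fin m → Set G)
    (C : Fin (n + 1) → Fin m) : Set G :=
  E (C 0) ∩ ⋂ i : Fin n, (g i)⁻¹ • E (C i.succ)

/-- The string `(g_0, g_1, …, g_n)` with `g_0 = e`. -/
def ghat {G : Type*} [Group G] {n : ℕ} (g : Fin n → G) : Fin (n + 1) → G := Fin.cons 1 g

/-- `x_j(C) = g_j • x_0(C)` for `0 ≤ j ≤ n` (with `g_0 = e`). -/
def xj {G : Type*} [Group G] {n m : ℕ} (g : Fin n → G) (E : Fin m → Set G)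
    (C : Fin (n + 1) → Fin m) (j : Fin (n + 1)) : Set G :=
  ghat g j • xzero g E C

/-- The real-valued indicator of a proposition. -/
noncomputable def ind (P : Prop) : ℝ :=
  letI := Classical.propDecidable P; if P then 1 else 0

/-- `f` is a solution of the system of configuration equations `Eq(g, E)`:
for all `1 ≤ i ≤ m` and `0 ≤ j, k ≤ n`,
`∑_{C : x_j(C) ⊆ E_i} f C = ∑_{C : x_k(C) ⊆ E_i} f C`. -/
def IsEqSolution {G : Type*} [Group G] {n m : ℕ} (g : Fin n → G) (E : Fin m → Set G)
    (f : {C : Fin (n + 1) → Fin m // IsConfig g E C} → ℝ) : Prop :=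
  ∀ (i : Fin m) (j k : Fin (n + 1)),
    ∑ᶠ C ∈ {C : {C : Fin (n + 1) → Fin m // IsConfig g E C} | xj g E C.1 j ⊆ E i}, f C =
    ∑ᶠ C ∈ {C : {C : Fin (n + 1) → Fin m // IsConfig g E C} | xj g E C.1 k ⊆ E i}, f C

end PaperStmt

namespace PaperStmt

/-- There is a directed edge in the graph `Γ(G, g, E)` from the vertex `a` to the vertex `b`:
there is a family of `b C` pieces for each configuration `C`, pairwise disjoint, whose union is
`⊔_{C : a C ≠ 0} x_0(C)`, such that each piece assigned to `C` is a left translate of `x_0(C)`. -/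
def ConfigEdge {G : Type*} [Group G] {n m : ℕ} (g : Fin n → G) (E : Fin m → Set G)
    (a b : {C : Fin (n + 1) → Fin m // IsConfig g E C} → ℕ) : Prop :=
  ∃ 𝒜 : (C : {C : Fin (n + 1) → Fin m // IsConfig g E C}) → Fin (b C) → Set G,
    (∀ (C C' : {C : Fin (n + 1) → Fin m // IsConfig g E C}) (j : Fin (b C)) (j' : Fin (b C')),
      (Sigma.mk C j : Σ C : {C : Fin (n + 1) → Fin m // IsConfig g E C}, Fin (b C)) ≠
        Sigma.mk C' j' → Disjoint (𝒜 C j) (𝒜 C' j')) ∧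
    (⋃ C, ⋃ j, 𝒜 C j) =
      (⋃ C ∈ {C : {C : Fin (n + 1) → Fin m // IsConfig g E C} | a C ≠ 0}, xzero g E C.1) ∧
    (∀ (C : {C : Fin (n + 1) → Fin m // IsConfig g E C}) (j : Fin (b C)),
      ∃ h : G, xzero g E C.1 = h • 𝒜 C j)

end PaperStmt

namespace PaperStmt

/-- Auxiliary: the type of configurations. -/
abbrev CfgAux {G : Type*} [Group G] {n m : ℕ} (g : Fin n → G) (E : Fin m → Set G) :=
  {C : Fin (n + 1) → Fin m // IsConfig g E C}

/-- If the graph `Γ(G, g, E)` contains vertices `a = (a_C)` and `b = (b_C)` joined by a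
directed edge from `a` to `b` with `a_C ∈ {0, 1}` and `b_C - a_C > 0` for every
configuration `C`, then `G` admits a paradoxical decomposition. -/
theorem edge_implies_paradoxical {G : Type*} [Group G] {n m : ℕ}
    (g : Fin n → G) (E : Fin m → Set G) (hE : IsPartition E)
    (a b : {C : Fin (n + 1) → Fin m // IsConfig g E C} → ℕ)
    (hedge : ConfigEdge g E a b)
    (ha : ∀ C, a C ≤ 1) (hab : ∀ C, a C < b C) :
    IsParadoxical G := by
  classical
  obtain ⟨𝒜, hdisj, hunion, htrans⟩ := hedge
  choose h hh using htrans
  -- membership characterization of xzero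
  have hmem : ∀ (C : Fin (n + 1) → Fin m) (x : G),
      x ∈ xzero g E C ↔ x ∈ E (C 0) ∧ ∀ i : Fin n, g i * x ∈ E (C i.succ) := by
    intro C x
    simp [xzero, Set.mem_iInter, Set.mem_inv_smul_set_iff, smul_eq_mul]
  -- pairwise disjointness of the xzero's
  have hdisx : ∀ C C' : CfgAux g E, C ≠ C' →
      Disjoint (xzero g E C.1) (xzero g E C'.1) := by
    intro C C' hne
    rw [Set.disjoint_left]
    intro x hx hx'
    rw [hmem] at hx hx'
    apply hne
    apply Subtype.ext
    funext j
    refine Fin.cases ?_ ?_ j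
    · by_contra hne0
      exact Set.disjoint_left.mp (hE.1 _ _ hne0) hx.1 hx'.1
    · intro i
      by_contra hne0
      exact Set.disjoint_left.mp (hE.1 _ _ hne0) (hx.2 i) (hx'.2 i)
  -- the xzero's cover G
  have hx : ∀ y : G, ∃ i, y ∈ E i := by
    intro y
    have : y ∈ ⋃ i, E i := hE.2 ▸ Set.mem_univ y
    exact Set.mem_iUnion.mp this
  have hcover : (⋃ C : CfgAux g E, xzero g E C.1) = Set.univ := by
    rw [Set.eq_univ_iff_forall]
    intro x
    obtain ⟨i0, hi0⟩ := hx x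
    choose c hc using fun j : Fin n => hx (g j * x)
    have hxz : x ∈ xzero g E (Fin.cons i0 c) := by
      rw [hmem]
      constructor
      · simpa using hi0
      · intro i; simpa using hc i
    refine Set.mem_iUnion.mpr ⟨⟨Fin.cons i0 c, ⟨x, ?_, ?_⟩⟩, hxz⟩
    · simpa using hi0
    · intro i; simpa using hc i
  have hbpos : ∀ C : CfgAux g E, 0 < b C := fun C => (Nat.zero_le _).trans_lt (hab C)
  -- piece indices
  let j0 : (C : CfgAux g E) → Fin (b C) := fun C => ⟨0, hbpos C⟩
  let j1 : (C : CfgAux g E) → Fin (b C) := fun C =>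
    if h2 : 1 < b C then ⟨1, h2⟩ else j0 C
  -- disjointness transfers along translations
  have hsd : ∀ (u : G) (S T : Set G), Disjoint S T → Disjoint (u • S) (u • T) := by
    intro u S T hST
    rw [Set.disjoint_iff_inter_eq_empty] at hST ⊢
    rw [← Set.smul_set_inter, hST, Set.smul_set_empty]
  -- each piece is contained in the union of the xzero's with a C ≠ 0
  have hA0sub : ∀ (C : CfgAux g E) (j : Fin (b C)),
      𝒜 C j ⊆ ⋃ D ∈ {D : CfgAux g E | a D ≠ 0}, xzero g E D.1 := by
    intro C j
    rw [← hunion]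
    exact Set.subset_iUnion₂_of_subset C j subset_rfl
  have hBempty : ∀ (C C' : CfgAux g E), a C' = 0 →
      𝒜 C (j0 C) ∩ xzero g E C'.1 = ∅ := by
    intro C C' hC'
    rw [Set.eq_empty_iff_forall_notMem]
    rintro x ⟨hx1, hx2⟩
    obtain ⟨D, hD, hxD⟩ := Set.mem_iUnion₂.mp (hA0sub C (j0 C) hx1)
    have hDC' : D ≠ C' := by rintro rfl; exact hD hC'
    exact Set.disjoint_left.mp (hdisx D C' hDC') hxD hx2
  -- nonemptiness
  haveI : Finite (CfgAux g E) := Subtype.finite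
  haveI : Fintype (CfgAux g E) := Fintype.ofFinite _
  haveI hne : Nonempty (CfgAux g E) := by
    by_contra hemp
    rw [not_nonempty_iff] at hemp
    have h1 := hcover
    rw [Set.iUnion_of_empty] at h1
    exact absurd (h1 ▸ Set.mem_univ (1 : G)) (Set.notMem_empty 1)
  -- the decomposition at the level of configurations
  let A : CfgAux g E → Set G := fun C => 𝒜 C (j0 C)
  let s : CfgAux g E → G := fun C => h C (j0 C)
  let B : CfgAux g E × CfgAux g E → Set G := fun P =>
    (h P.2 (j1 P.2))⁻¹ • (𝒜 P.1 (j0 P.1) ∩ xzero g E P.2.1)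
  let t : CfgAux g E × CfgAux g E → G := fun P => h P.1 (j0 P.1) * h P.2 (j1 P.2)
  have hsA : ∀ C : CfgAux g E, s C • A C = xzero g E C.1 := fun C => (hh C (j0 C)).symm
  have hBsub : ∀ P : CfgAux g E × CfgAux g E, B P ⊆ 𝒜 P.2 (j1 P.2) := by
    intro P
    calc B P ⊆ (h P.2 (j1 P.2))⁻¹ • xzero g E P.2.1 :=
          Set.smul_set_mono Set.inter_subset_right
      _ = 𝒜 P.2 (j1 P.2) := by rw [hh P.2 (j1 P.2), inv_smul_smul]
  have hB1 : ∀ P : CfgAux g E × CfgAux g E, ¬ 1 < b P.2 → B P = ∅ := by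
    intro P hP
    have haP : a P.2 = 0 := by have := hab P.2; omega
    show (h P.2 (j1 P.2))⁻¹ • (𝒜 P.1 (j0 P.1) ∩ xzero g E P.2.1) = ∅
    rw [hBempty P.1 P.2 haP, Set.smul_set_empty]
  have htB : ∀ P : CfgAux g E × CfgAux g E,
      t P • B P = xzero g E P.1.1 ∩ (h P.1 (j0 P.1)) • xzero g E P.2.1 := by
    intro P
    show (h P.1 (j0 P.1) * h P.2 (j1 P.2)) •
        ((h P.2 (j1 P.2))⁻¹ • (𝒜 P.1 (j0 P.1) ∩ xzero g E P.2.1)) = _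
    rw [mul_smul, smul_inv_smul, Set.smul_set_inter, ← hh P.1 (j0 P.1)]
  -- sigma-distinctness helper
  have hsig1 : ∀ (C C' : CfgAux g E) (j : Fin (b C)) (j' : Fin (b C')), C ≠ C' →
      (Sigma.mk C j : Σ C : CfgAux g E, Fin (b C)) ≠ Sigma.mk C' j' := by
    intro C C' j j' hCC' he
    exact hCC' (congrArg Sigma.fst he)
  refine ⟨Fintype.card (CfgAux g E), Fintype.card (CfgAux g E × CfgAux g E),
    Fintype.card_pos, Fintype.card_pos, ?_⟩
  let e := (Fintype.equivFin (CfgAux g E)).symm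
  let f := (Fintype.equivFin (CfgAux g E × CfgAux g E)).symm
  refine ⟨fun i => A (e i), fun j => B (f j), fun i => s (e i), fun j => t (f j),
    ?_, ?_, ?_, ?_, ?_, ?_, ?_⟩
  · -- A's pairwise disjoint
    intro i i' hii'
    exact hdisj _ _ _ _ (hsig1 _ _ _ _ (e.injective.ne hii'))
  · -- B's pairwise disjoint
    intro j j' hjj'
    have hPQ : f j ≠ f j' := f.injective.ne hjj'
    by_cases h2 : (f j).2 = (f j').2
    · have h1 : (f j).1 ≠ (f j').1 := by
        intro h1; exact hPQ (Prod.ext h1 h2)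
      have hd0 : Disjoint (𝒜 (f j).1 (j0 (f j).1) ∩ xzero g E (f j).2.1)
          (𝒜 (f j').1 (j0 (f j').1) ∩ xzero g E (f j').2.1) :=
        Disjoint.mono Set.inter_subset_left Set.inter_subset_left
          (hdisj _ _ _ _ (hsig1 _ _ _ _ h1))
      have hd := hsd ((h (f j).2 (j1 (f j).2))⁻¹) _ _ hd0
      show Disjoint (B (f j)) (B (f j'))
      show Disjoint ((h (f j).2 (j1 (f j).2))⁻¹ • (𝒜 (f j).1 (j0 (f j).1) ∩ xzero g E (f j).2.1))
        ((h (f j').2 (j1 (f j').2))⁻¹ • (𝒜 (f j').1 (j0 (f j').1) ∩ xzero g E (f j').2.1))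
      rw [← h2] at hd ⊢
      exact hd
    · exact Disjoint.mono (hBsub (f j)) (hBsub (f j')) (hdisj _ _ _ _ (hsig1 _ _ _ _ h2))
  · -- A disjoint from B
    intro i j
    by_cases h2 : 1 < b (f j).2
    · refine Disjoint.mono_right (hBsub (f j)) (hdisj _ _ _ _ ?_)
      intro he
      have h1 : e i = (f j).2 := congrArg Sigma.fst he
      have he' : (Sigma.mk (f j).2 (j0 (f j).2) : Σ C : CfgAux g E, Fin (b C))
          = Sigma.mk (f j).2 (j1 (f j).2) := h1 ▸ he
      have hval : j0 (f j).2 = j1 (f j).2 :=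
        eq_of_heq (Sigma.mk.inj_iff.mp he').2
      have hv : (j0 (f j).2).1 = (j1 (f j).2).1 := congrArg Fin.val hval
      simp only [j0, j1, dif_pos h2] at hv
      omega
    · show Disjoint (A (e i)) (B (f j))
      rw [hB1 (f j) h2]
      exact disjoint_bot_right
  · -- translates of A cover G
    rw [e.surjective.iUnion_comp (fun C => s C • A C)]
    calc (⋃ C : CfgAux g E, s C • A C) = ⋃ C : CfgAux g E, xzero g E C.1 :=
          Set.iUnion_congr hsA
      _ = Set.univ := hcover
  · -- translates of A pairwise disjoint
    intro i i' hii'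
    rw [hsA, hsA]
    exact hdisx _ _ (e.injective.ne hii')
  · -- translates of B cover G
    rw [f.surjective.iUnion_comp (fun P => t P • B P)]
    have h1 : (⋃ P : CfgAux g E × CfgAux g E, t P • B P)
        = ⋃ C : CfgAux g E, ⋃ C' : CfgAux g E,
            xzero g E C.1 ∩ (h C (j0 C)) • xzero g E C'.1 := by
      rw [Set.iUnion_congr htB]
      exact Set.iUnion_prod' _
    rw [h1]
    have h2 : ∀ C : CfgAux g E,
        (⋃ C' : CfgAux g E, xzero g E C.1 ∩ (h C (j0 C)) • xzero g E C'.1)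
          = xzero g E C.1 := by
      intro C
      rw [← Set.inter_iUnion, ← Set.smul_set_iUnion, hcover, Set.smul_set_univ,
        Set.inter_univ]
    rw [Set.iUnion_congr h2]
    exact hcover
  · -- translates of B pairwise disjoint
    intro j j' hjj'
    have hPQ : f j ≠ f j' := f.injective.ne hjj'
    show Disjoint (t (f j) • B (f j)) (t (f j') • B (f j'))
    rw [htB, htB]
    by_cases h1 : (f j).1 = (f j').1
    · have h2 : (f j).2 ≠ (f j').2 := by
        intro h2; exact hPQ (Prod.ext h1 h2)
      refine Disjoint.mono Set.inter_subset_right Set.inter_subset_right ?_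
      rw [h1]
      exact hsd _ _ _ (hdisx _ _ h2)
    · exact Disjoint.mono Set.inter_subset_left Set.inter_subset_left (hdisx _ _ h1)


end PaperStmt
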